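/- arXiv:2110.00709 — 7 statements merged into one kernel-verified Lean document; each statement's English description precedes it below -/
import Mathlib

section
/- Let G be an m-regular graph on 2n vertices with 3 ≤ n−1 ≤ m < 2n. Then the domination polynomial of G is unimodal with a mode at n. -/
/-- A finite set of vertices dominates the graph. -/
def Dominates {V : Type*} (G : SimpleGraph V) (U : Finset V) : Prop :=
  ∀ v : V, v ∈ U ∨ ∃ u ∈ U, G.Adj u v

/-- The number of dominating sets of size `i`. -/
noncomputable def domCount {V : Type*} [Fintype V] (G : SimpleGraph V) (i : ℕ) : ℕ :=
  Nat.card {U : Finset V // U.card = i ∧ Dominates G U}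

/-- The coefficient sequence is non-decreasing up to `k` and non-increasing afterwards,
so in particular `k` is a mode. -/
def UnimodalWithMode (d : ℕ → ℕ) (k : ℕ) : Prop :=
  (∀ i < k, d i ≤ d (i + 1)) ∧ (∀ i, k ≤ i → d (i + 1) ≤ d i)

open Finset

section Aux

variable {V : Type*} [Fintype V]

lemma aux_domCount_eq (G : SimpleGraph V) [DecidablePred (Dominates G)] (i : ℕ) :
    domCount G i = (univ.filter (fun U : Finset V => U.card = i ∧ Dominates G U)).card := by
  classical
  rw [domCount, Nat.card_eq_fintype_card, Fintype.card_subtype]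

omit [Fintype V] in
lemma aux_dominates_superset (G : SimpleGraph V) {A B : Finset V}
    (h : Dominates G A) (hAB : A ⊆ B) : Dominates G B := by
  intro v
  rcases h v with hv | ⟨u, hu, hadj⟩
  · exact Or.inl (hAB hv)
  · exact Or.inr ⟨u, hAB hu, hadj⟩

lemma aux_filter_card_eq [DecidableEq V] (i : ℕ) :
    (univ.filter (fun U : Finset V => U.card = i)).card = (Fintype.card V).choose i := by
  have h : (univ.filter (fun U : Finset V => U.card = i)) = (univ : Finset V).powersetCard i := by
    ext U; simp [mem_powersetCard, subset_univ]
  rw [h, card_powersetCard, card_univ]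

lemma aux_mono_step [DecidableEq V] (G : SimpleGraph V)
    [DecidablePred (Dominates G)] (i : ℕ) (hi : i + 1 ≤ Fintype.card V - i) :
    (univ.filter (fun U : Finset V => U.card = i ∧ Dominates G U)).card
      ≤ (univ.filter (fun U : Finset V => U.card = i + 1 ∧ Dominates G U)).card := by
  classical
  set N := Fintype.card V with hN
  set S := univ.filter (fun U : Finset V => U.card = i ∧ Dominates G U) with hS
  set T := univ.filter (fun U : Finset V => U.card = i + 1 ∧ Dominates G U) with hT
  have claim1 : ∀ A ∈ S, N - i ≤ (T.filter (fun B => A ⊆ B)).card := by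
    intro A hA
    rw [hS, mem_filter] at hA
    obtain ⟨-, hAcard, hAdom⟩ := hA
    have : (Aᶜ).card ≤ (T.filter (fun B => A ⊆ B)).card := by
      apply Finset.card_le_card_of_injOn (fun x => insert x A)
      · intro x hx
        rw [mem_coe, mem_compl] at hx
        rw [mem_coe, mem_filter, hT, mem_filter]
        refine ⟨⟨mem_univ _, ?_, aux_dominates_superset G hAdom (subset_insert _ _)⟩,
          subset_insert _ _⟩
        rw [card_insert_of_notMem hx, hAcard]
      · intro x hx y hy hxy
        rw [mem_coe, mem_compl] at hx hy
        simp only at hxy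
        have : x ∈ insert y A := hxy ▸ mem_insert_self x A
        rcases mem_insert.mp this with h | h
        · exact h
        · exact absurd h hx
    calc N - i = (Aᶜ).card := by rw [card_compl, hAcard]
      _ ≤ _ := this
  have claim2 : ∑ A ∈ S, (T.filter (fun B => A ⊆ B)).card
      = ∑ B ∈ T, (S.filter (fun A => A ⊆ B)).card := by
    simp only [card_filter]
    exact Finset.sum_comm
  have claim3 : ∀ B ∈ T, (S.filter (fun A => A ⊆ B)).card ≤ i + 1 := by
    intro B hB
    rw [hT, mem_filter] at hB
    obtain ⟨-, hBcard, -⟩ := hB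
    have hsub : S.filter (fun A => A ⊆ B) ⊆ B.powersetCard i := by
      intro A hA
      rw [mem_filter, hS, mem_filter] at hA
      rw [mem_powersetCard]
      exact ⟨hA.2, hA.1.2.1⟩
    calc (S.filter (fun A => A ⊆ B)).card ≤ (B.powersetCard i).card :=
          card_le_card hsub
      _ = (i+1).choose i := by rw [card_powersetCard, hBcard]
      _ = i + 1 := Nat.choose_succ_self_right i
  have key : S.card * (N - i) ≤ T.card * (i + 1) := by
    calc S.card * (N - i) = ∑ _A ∈ S, (N - i) := by rw [sum_const, smul_eq_mul]
      _ ≤ ∑ A ∈ S, (T.filter (fun B => A ⊆ B)).card := Finset.sum_le_sum claim1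
      _ = ∑ B ∈ T, (S.filter (fun A => A ⊆ B)).card := claim2
      _ ≤ ∑ _B ∈ T, (i + 1) := Finset.sum_le_sum claim3
      _ = T.card * (i + 1) := by rw [sum_const, smul_eq_mul]
  have : S.card * (i + 1) ≤ T.card * (i + 1) :=
    le_trans (Nat.mul_le_mul_left _ hi) key
  exact Nat.le_of_mul_le_mul_right this (Nat.succ_pos i)

lemma aux_nondom_subset [DecidableEq V] (G : SimpleGraph V)
    [DecidableRel G.Adj] {U : Finset V} (h : ¬ Dominates G U) :
    ∃ v : V, U ⊆ (insert v (G.neighborFinset v))ᶜ := by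
  rw [Dominates] at h
  push_neg at h
  obtain ⟨v, hv, hadj⟩ := h
  refine ⟨v, fun u hu => ?_⟩
  rw [mem_compl, mem_insert]
  push_neg
  refine ⟨fun huv => hv (huv ▸ hu), fun hmem => ?_⟩
  rw [SimpleGraph.mem_neighborFinset] at hmem
  exact hadj u hu hmem.symm

lemma aux_closed_card [DecidableEq V] (G : SimpleGraph V)
    [DecidableRel G.Adj] (m : ℕ) (hreg : ∀ v, G.degree v = m) (v : V) :
    (insert v (G.neighborFinset v)).card = m + 1 := by
  rw [card_insert_of_notMem, SimpleGraph.card_neighborFinset_eq_degree, hreg]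
  simp

lemma aux_dom_of_large [DecidableEq V] (G : SimpleGraph V)
    [DecidableRel G.Adj] (m n : ℕ) (hcard : Fintype.card V = 2 * n)
    (hreg : ∀ v, G.degree v = m) (hnm : n ≤ m + 1)
    {U : Finset V} (hU : n + 1 ≤ U.card) : Dominates G U := by
  by_contra h
  obtain ⟨v, hsub⟩ := aux_nondom_subset G h
  have h1 : U.card ≤ 2 * n - (m + 1) := by
    calc U.card ≤ ((insert v (G.neighborFinset v))ᶜ).card := card_le_card hsub
      _ = 2 * n - (m + 1) := by rw [card_compl, aux_closed_card G m hreg, hcard]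
  omega

lemma aux_bad_le [DecidableEq V] (G : SimpleGraph V)
    [DecidableRel G.Adj] [DecidablePred (Dominates G)]
    (m n : ℕ) (hcard : Fintype.card V = 2 * n) (hreg : ∀ v, G.degree v = m)
    (hnm : n ≤ m + 1) (hn : 1 ≤ n) :
    (univ.filter (fun U : Finset V => U.card = n ∧ ¬ Dominates G U)).card ≤ 2 * n := by
  have hne : Nonempty V := by
    rw [← Fintype.card_pos_iff]
    omega
  set bad := univ.filter (fun U : Finset V => U.card = n ∧ ¬ Dominates G U) with hbad
  have key : ∀ U : Finset V, ∃ v : V, U ∈ bad → U = (insert v (G.neighborFinset v))ᶜ := by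
    intro U
    by_cases hU : U ∈ bad
    · rw [hbad, mem_filter] at hU
      obtain ⟨-, hUcard, hUdom⟩ := hU
      obtain ⟨v, hsub⟩ := aux_nondom_subset G hUdom
      refine ⟨v, fun _ => ?_⟩
      apply Finset.eq_of_subset_of_card_le hsub
      rw [card_compl, aux_closed_card G m hreg, hcard, hUcard]
      omega
    · exact ⟨Classical.arbitrary V, fun h => absurd h hU⟩
  calc bad.card ≤ (univ : Finset V).card := by
        apply Finset.card_le_card_of_injOn (fun U => Classical.choose (key U))
        · intro _ _; exact mem_univ _
        · intro U1 h1 U2 h2 heq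
          rw [mem_coe] at h1 h2
          have e1 := Classical.choose_spec (key U1) h1
          have e2 := Classical.choose_spec (key U2) h2
          simp only at heq
          rw [e1, e2, heq]
    _ = 2 * n := by rw [card_univ, hcard]

end Aux

lemma aux_choose_decr (n i : ℕ) (hi : n ≤ i) :
    Nat.choose (2 * n) (i + 1) ≤ Nat.choose (2 * n) i := by
  rcases Nat.lt_or_ge i (2 * n) with h | h
  · have h1 : Nat.choose (2 * n) (i + 1) = Nat.choose (2 * n) (2 * n - (i + 1)) :=
      (Nat.choose_symm (by omega)).symm
    have h2 : Nat.choose (2 * n) i = Nat.choose (2 * n) (2 * n - i) :=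
      (Nat.choose_symm (by omega)).symm
    rw [h1, h2]
    have h3 : 2 * n - i = (2 * n - (i + 1)) + 1 := by omega
    rw [h3]
    exact Nat.choose_le_succ_of_lt_half_left (by omega)
  · rw [Nat.choose_eq_zero_of_lt (by omega)]
    exact Nat.zero_le _

lemma aux_central_ge (n : ℕ) (hn : 4 ≤ n) : 2 * n * (n + 1) ≤ Nat.choose (2 * n) n := by
  induction n, hn using Nat.le_induction with
  | base => decide
  | succ n hn ih =>
    have e : 2 * (n + 1) = (2 * n + 1) + 1 := by ring
    rw [e, Nat.choose_succ_succ]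
    have h1 : Nat.choose (2 * n) n ≤ Nat.choose (2 * n + 1) n :=
      Nat.choose_le_choose n (by omega)
    have h2 : Nat.choose (2 * n) n ≤ Nat.choose (2 * n + 1) (n + 1) := by
      rw [Nat.choose_succ_succ]
      exact Nat.le_add_right _ _
    nlinarith [ih, h1, h2]

lemma aux_final_ineq (n : ℕ) (hn : 4 ≤ n) :
    Nat.choose (2 * n) (n + 1) + 2 * n ≤ Nat.choose (2 * n) n := by
  have h1 : Nat.choose (2 * n) (n + 1) * (n + 1) = Nat.choose (2 * n) n * n := by
    rw [Nat.choose_succ_right_eq]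
    congr 1
    omega
  have h2 := aux_central_ge n hn
  nlinarith [h1, h2]

theorem regular_unimodal {V : Type*} [Fintype V] (G : SimpleGraph V) [DecidableRel G.Adj]
    (m n : ℕ) (hcard : Fintype.card V = 2 * n) (hreg : ∀ v, G.degree v = m)
    (hn : 3 ≤ n - 1) (hnm : n - 1 ≤ m) (hm : m < 2 * n) :
    UnimodalWithMode (domCount G) n := by
  classical
  have hn4 : 4 ≤ n := by omega
  have hnm1 : n ≤ m + 1 := by omega
  have hdom_all : ∀ j, n + 1 ≤ j → domCount G j = (2 * n).choose j := by
    intro j hj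
    rw [aux_domCount_eq]
    have heq : univ.filter (fun U : Finset V => U.card = j ∧ Dominates G U)
        = univ.filter (fun U : Finset V => U.card = j) := by
      ext U
      simp only [mem_filter, mem_univ, true_and, and_iff_left_iff_imp]
      intro hc
      exact aux_dom_of_large G m n hcard hreg hnm1 (by omega)
    rw [heq, aux_filter_card_eq, hcard]
  constructor
  · intro i hi
    rw [aux_domCount_eq, aux_domCount_eq]
    exact aux_mono_step G i (by rw [hcard]; omega)
  · intro i hi
    rcases Nat.eq_or_lt_of_le hi with heq | hi'
    · subst heq
      rw [hdom_all (n + 1) le_rfl]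
      have hsplit : (univ.filter (fun U : Finset V => U.card = n ∧ Dominates G U)).card
          + (univ.filter (fun U : Finset V => U.card = n ∧ ¬ Dominates G U)).card
          = (2 * n).choose n := by
        rw [← hcard, ← aux_filter_card_eq n, ← Finset.filter_filter, ← Finset.filter_filter,
          Finset.card_filter_add_card_filter_not]
      have hbad := aux_bad_le G m n hcard hreg hnm1 (by omega)
      have hfin := aux_final_ineq n hn4
      rw [aux_domCount_eq]
      omega
    · rw [hdom_all (i + 1) (by omega), hdom_all i (by omega)]
      exact aux_choose_decr n i hi
end

section
/- Let G be an m-regular graph on 2n vertices with m ≥ n−1. Then every subset of V(G) of size at least n+1 is dominating, and the number of non-dominating subsets of size n is at most 2n. -/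
theorem regular_large_sets_dominate {V : Type*} [Fintype V] (G : SimpleGraph V)
    [DecidableRel G.Adj] (m n : ℕ) (hcard : Fintype.card V = 2 * n)
    (hreg : ∀ v, G.degree v = m) (hnm : n - 1 ≤ m) :
    (∀ U : Finset V, n + 1 ≤ U.card → Dominates G U) ∧
      Nat.card {U : Finset V // U.card = n ∧ ¬ Dominates G U} ≤ 2 * n := by
  classical
  have hN : ∀ v : V, (insert v (G.neighborFinset v)).card = m + 1 := by
    intro v
    rw [Finset.card_insert_of_notMem (by simp), G.card_neighborFinset_eq_degree, hreg]
  have hcompl : ∀ v : V, ((insert v (G.neighborFinset v))ᶜ).card = 2 * n - (m + 1) := by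
    intro v
    rw [Finset.card_compl, hN, hcard]
  have key : ∀ U : Finset V, ¬ Dominates G U →
      ∃ v, U ⊆ (insert v (G.neighborFinset v))ᶜ := by
    intro U hU
    simp only [Dominates, not_forall] at hU
    obtain ⟨v, hv⟩ := hU
    push_neg at hv
    refine ⟨v, fun u hu => ?_⟩
    simp only [Finset.mem_compl, Finset.mem_insert, SimpleGraph.mem_neighborFinset]
    rintro (rfl | hadj)
    · exact hv.1 hu
    · exact hv.2 u hu hadj.symm
  constructor
  · intro U hU
    by_contra h
    obtain ⟨v, hv⟩ := key U h
    have := Finset.card_le_card hv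
    rw [hcompl] at this
    omega
  · have heq : ∀ U : {U : Finset V // U.card = n ∧ ¬ Dominates G U},
        ∃ v, (U : Finset V) = (insert v (G.neighborFinset v))ᶜ := by
      rintro ⟨U, hUn, hUd⟩
      obtain ⟨v, hv⟩ := key U hUd
      refine ⟨v, Finset.eq_of_subset_of_card_le hv ?_⟩
      rw [hcompl, hUn]
      omega
    choose f hf using heq
    have hinj : Function.Injective f := by
      intro U1 U2 h
      apply Subtype.ext
      rw [hf U1, hf U2, h]
    calc Nat.card {U : Finset V // U.card = n ∧ ¬ Dominates G U}
        ≤ Nat.card V := Nat.card_le_card_of_injective f hinj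
      _ = 2 * n := by rw [Nat.card_eq_fintype_card, hcard]
end

section
/- Suppose 2 ≤ n₁ ≤ n₂ ≤ ⋯ ≤ n_t are integers with t ≥ 2, n₂ ≥ 3, and if t = 2 then n₁ ≥ 3. Then (n₁−1)(n₂−1)⋯(n_t−1) ≥ 2·log₂(n₁n₂⋯n_t) unless the tuple (n₁,…,n_t) is one of: (3,3), (3,4), (2,3,3), (2,3,4), (2,3,5), (2,3,6), (2,4,4), (3,3,3), (2,3,3,3), (2,3,3,4). -/
private lemma sq_le_two_pow : ∀ m : ℕ, 4 ≤ m → m ^ 2 ≤ 2 ^ m := by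
  intro m hm
  induction m, hm using Nat.le_induction with
  | base => norm_num
  | succ m hm ih =>
    have h1 : (m + 1) ^ 2 ≤ 2 * m ^ 2 := by nlinarith
    calc (m + 1) ^ 2 ≤ 2 * m ^ 2 := h1
      _ ≤ 2 * 2 ^ m := Nat.mul_le_mul_left 2 ih
      _ = 2 ^ (m + 1) := by ring

private lemma sq_le_two_pow' : ∀ m : ℕ, 4 ≤ m → m ^ 2 ≤ 2 ^ (2 * (m - 2)) := by
  intro m hm
  induction m, hm using Nat.le_induction with
  | base => norm_num
  | succ m hm ih =>
    have h1 : m + 1 ≤ 2 * m := by omega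
    have h2 : 2 * (m + 1 - 2) = 2 * (m - 2) + 2 := by omega
    calc (m + 1) ^ 2 ≤ (2 * m) ^ 2 := Nat.pow_le_pow_left h1 2
      _ = 4 * m ^ 2 := by ring
      _ ≤ 4 * 2 ^ (2 * (m - 2)) := Nat.mul_le_mul_left 4 ih
      _ = 2 ^ (2 * (m - 2) + 2) := by rw [pow_add]; ring
      _ = 2 ^ (2 * (m + 1 - 2)) := by rw [h2]

private lemma step_lemma (c q m0 : ℕ) (hq : 2 ≤ q) (hm0 : 1 ≤ m0)
    (h0 : c * m0 ^ 2 ≤ 2 ^ (q * (m0 - 1))) :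
    ∀ m, m0 ≤ m → c * m ^ 2 ≤ 2 ^ (q * (m - 1)) := by
  intro m hm
  induction m, hm using Nat.le_induction with
  | base => exact h0
  | succ m hm ih =>
    have hm1 : 1 ≤ m := le_trans hm0 hm
    have hsq : (m + 1) ^ 2 ≤ 4 * m ^ 2 := by
      calc (m + 1) ^ 2 ≤ (2 * m) ^ 2 := Nat.pow_le_pow_left (by omega) 2
        _ = 4 * m ^ 2 := by ring
    have h1 : c * (m + 1) ^ 2 ≤ 4 * (c * m ^ 2) := by
      calc c * (m + 1) ^ 2 ≤ c * (4 * m ^ 2) := Nat.mul_le_mul_left c hsq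
        _ = 4 * (c * m ^ 2) := by ring
    have h4 : q * (m - 1) + 2 ≤ q * (m + 1 - 1) := by
      have hmm : m + 1 - 1 = (m - 1) + 1 := by omega
      rw [hmm, Nat.mul_succ]
      omega
    calc c * (m + 1) ^ 2 ≤ 4 * (c * m ^ 2) := h1
      _ ≤ 4 * 2 ^ (q * (m - 1)) := Nat.mul_le_mul_left 4 ih
      _ = 2 ^ (q * (m - 1) + 2) := by rw [pow_add]; ring
      _ ≤ 2 ^ (q * (m + 1 - 1)) := Nat.pow_le_pow_right (by norm_num) h4

private lemma base2_lemma (a b : ℕ) (ha : 3 ≤ a) (hab : a ≤ b) (hex : ¬(a = 3 ∧ b ≤ 4)) :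
    (a * b) ^ 2 ≤ 2 ^ ((a - 1) * (b - 1)) := by
  rcases eq_or_lt_of_le ha with h3 | h4
  · subst h3
    have hb5 : 5 ≤ b := by omega
    have := step_lemma 9 2 5 (by norm_num) (by norm_num) (by norm_num) b hb5
    calc (3 * b) ^ 2 = 9 * b ^ 2 := by ring
      _ ≤ 2 ^ (2 * (b - 1)) := this
      _ = 2 ^ ((3 - 1) * (b - 1)) := by norm_num
  · have ha4 : 4 ≤ a := h4
    have hb4 : 4 ≤ b := le_trans ha4 hab
    have hsa := sq_le_two_pow a ha4
    have hsb := sq_le_two_pow b hb4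
    have hexp : a + b ≤ (a - 1) * (b - 1) := by
      obtain ⟨x, rfl⟩ : ∃ x, a = x + 4 := ⟨a - 4, by omega⟩
      obtain ⟨y, rfl⟩ : ∃ y, b = y + 4 := ⟨b - 4, by omega⟩
      have e1 : x + 4 - 1 = x + 3 := by omega
      have e2 : y + 4 - 1 = y + 3 := by omega
      rw [e1, e2]
      nlinarith
    calc (a * b) ^ 2 = a ^ 2 * b ^ 2 := by ring
      _ ≤ 2 ^ a * 2 ^ b := Nat.mul_le_mul hsa hsb
      _ = 2 ^ (a + b) := (pow_add 2 a b).symm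
      _ ≤ 2 ^ ((a - 1) * (b - 1)) := Nat.pow_le_pow_right (by norm_num) hexp

private lemma append_lemma (P Q m : ℕ) (h : P ^ 2 ≤ 2 ^ Q) (hQ : 2 ≤ Q) (hm : 3 ≤ m)
    (hm3 : m = 3 → 4 ≤ Q) : (m * P) ^ 2 ≤ 2 ^ ((m - 1) * Q) := by
  have key : m ^ 2 ≤ 2 ^ ((m - 2) * Q) := by
    rcases eq_or_lt_of_le hm with h3 | h4
    · have hQ4 := hm3 h3.symm
      have h1 : m - 2 = 1 := by omega
      rw [h1, one_mul]
      calc m ^ 2 = 9 := by rw [← h3]; norm_num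
        _ ≤ 2 ^ 4 := by norm_num
        _ ≤ 2 ^ Q := Nat.pow_le_pow_right (by norm_num) hQ4
    · have hm4 : 4 ≤ m := h4
      calc m ^ 2 ≤ 2 ^ (2 * (m - 2)) := sq_le_two_pow' m hm4
        _ ≤ 2 ^ ((m - 2) * Q) := by
            apply Nat.pow_le_pow_right (by norm_num)
            rw [mul_comm 2 (m - 2)]
            exact Nat.mul_le_mul_left _ hQ
  calc (m * P) ^ 2 = m ^ 2 * P ^ 2 := by ring
    _ ≤ 2 ^ ((m - 2) * Q) * 2 ^ Q := Nat.mul_le_mul key h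
    _ = 2 ^ ((m - 2) * Q + Q) := (pow_add 2 _ _).symm
    _ = 2 ^ ((m - 1) * Q) := by
        congr 1
        have h1 : m - 1 = (m - 2) + 1 := by omega
        rw [h1, Nat.succ_mul]

private lemma qlb : ∀ l : List ℕ, l.Pairwise (· ≥ ·) → (∀ x ∈ l, 2 ≤ x) → l.count 2 ≤ 1 →
    2 ^ (l.length - 1) ≤ (l.map (· - 1)).prod := by
  intro l
  induction l with
  | nil => simp
  | cons m l' ih =>
    intro hs h2 hc
    rcases List.pairwise_cons.mp hs with ⟨hma, hs'⟩
    match l' with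
    | [] =>
      have : 2 ≤ m := h2 m (by simp)
      simp only [List.map_cons, List.map_nil, List.prod_cons, List.prod_nil,
        List.length_cons, List.length_nil]
      omega
    | x :: l'' =>
      have hm3 : 3 ≤ m := by
        by_contra hcon
        have hm2 : m = 2 := by have := h2 m (by simp); omega
        have hx2 : x = 2 := by
          have h1 := h2 x (by simp)
          have h2' := hma x (by simp)
          omega
        have hmem : 2 ∈ x :: l'' := by rw [← hx2]; simp
        have hcx : 0 < (x :: l'').count 2 := List.count_pos_iff.mpr hmem
        rw [List.count_cons] at hc
        simp [hm2] at hc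
        omega
      have hc' : (x :: l'').count 2 ≤ 1 :=
        le_trans List.count_le_count_cons hc
      have h2' : ∀ y ∈ x :: l'', 2 ≤ y := fun y hy => h2 y (by simp [hy])
      have ihx := ih hs' h2' hc'
      have hm1 : 2 ≤ m - 1 := by omega
      have key : 2 * 2 ^ ((x :: l'').length - 1) ≤ (m - 1) * ((x :: l'').map (· - 1)).prod :=
        Nat.mul_le_mul hm1 ihx
      have hlen2 : (m :: x :: l'').length - 1 = ((x :: l'').length - 1) + 1 := by simp
      rw [List.map_cons, List.prod_cons, hlen2, pow_succ, mul_comm]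
      exact key

private def Exc : List (List ℕ) :=
  [[3, 3], [3, 4], [2, 3, 3], [2, 3, 4], [2, 3, 5], [2, 3, 6], [2, 4, 4], [3, 3, 3],
    [2, 3, 3, 3], [2, 3, 3, 4]]

private lemma key_lemma : ∀ l : List ℕ, l.Pairwise (· ≥ ·) → 2 ≤ l.length →
    (∀ x ∈ l, 2 ≤ x) → l.count 2 ≤ 1 → (l.length = 2 → l.count 2 = 0) →
    l.reverse ∉ Exc → l.prod ^ 2 ≤ 2 ^ ((l.map (· - 1)).prod) := by
  intro l
  induction l with
  | nil => intro _ h; simp at h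
  | cons m l' ih =>
    intro hs hlen h2 hc h2len hE
    rcases List.pairwise_cons.mp hs with ⟨hma, hs'⟩
    by_cases hlen1 : l'.length ≤ 1
    · -- base case: length 2
      have hl2 : (m :: l').length = 2 := by
        simp only [List.length_cons] at hlen ⊢; omega
      obtain ⟨x, rfl⟩ : ∃ x, l' = [x] := by
        match l', hl2 with
        | [x], _ => exact ⟨x, rfl⟩
      have hc0 := h2len hl2
      have hmx : x ≤ m := hma x (by simp)
      have hm2 : 2 ≤ m := h2 m (by simp)
      have hx2 : 2 ≤ x := h2 x (by simp)
      have hmne : m ≠ 2 := by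
        intro h; rw [h] at hc0; simp [List.count_cons] at hc0
      have hxne : x ≠ 2 := by
        intro h; rw [h] at hc0; simp [List.count_cons] at hc0
      have hx3 : 3 ≤ x := by omega
      have hex : ¬(x = 3 ∧ m ≤ 4) := by
        rintro ⟨rfl, hm4⟩
        interval_cases m
        · exact hE (by decide)
        · exact hE (by decide)
      have hb2 := base2_lemma x m hx3 hmx hex
      calc (m :: [x]).prod ^ 2 = (x * m) ^ 2 := by simp [mul_comm]
        _ ≤ 2 ^ ((x - 1) * (m - 1)) := hb2
        _ = 2 ^ (((m :: [x]).map (· - 1)).prod) := by simp [mul_comm]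
    · have hlen' : 2 ≤ l'.length := by omega
      have h2' : ∀ y ∈ l', 2 ≤ y := fun y hy => h2 y (by simp [hy])
      have hc' : l'.count 2 ≤ 1 := le_trans List.count_le_count_cons hc
      have hm3 : 3 ≤ m := by
        by_contra hcon
        have hm2 : m = 2 := by have := h2 m (by simp); omega
        obtain ⟨x, l'', rfl⟩ : ∃ x l'', l' = x :: l'' := by
          match l' with
          | x :: l'' => exact ⟨x, l'', rfl⟩
        have hx2 : x = 2 := by
          have h1 := h2' x (by simp)
          have hq := hma x (by simp)
          omega
        have hmem : 2 ∈ x :: l'' := by rw [← hx2]; simp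
        have hcx : 0 < (x :: l'').count 2 := List.count_pos_iff.mpr hmem
        rw [List.count_cons] at hc
        simp [hm2] at hc
        omega
      -- rewrite the goal
      rw [List.prod_cons, List.map_cons, List.prod_cons]
      by_cases hsp1 : l'.length = 2 ∧ 2 ∈ l'
      · -- l' = [a, 2]
        obtain ⟨a, c, rfl⟩ := List.length_eq_two.mp hsp1.1
        have hac : c ≤ a := (List.pairwise_cons.mp hs').1 c (by simp)
        have hc2 : 2 ≤ c := h2' c (by simp)
        have ha2 : 2 ≤ a := h2' a (by simp)
        have hane : a ≠ 2 := by
          intro haa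
          have hcc2 : c = 2 := by omega
          subst haa; subst hcc2
          rcases eq_or_ne m 2 with hm | hm <;> simp [List.count_cons, hm] at hc
        have hcc : c = 2 := by
          rcases List.mem_cons.mp hsp1.2 with h | h
          · exact absurd h.symm hane
          · simp at h; omega
        subst hcc
        have ha3 : 3 ≤ a := by omega
        have ham : a ≤ m := hma a (by simp)
        -- goal : (m * (a * (2 * 1))) ^ 2 ≤ 2 ^ ((m-1) * ((a-1) * ((2-1) * 1)))
        rcases Nat.lt_or_ge a 5 with ha5 | ha5
        · interval_cases a
          · -- a = 3 : m ≥ 7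
            have hm7 : 7 ≤ m := by
              by_contra hcon
              interval_cases m
              · exact hE (by decide)
              · exact hE (by decide)
              · exact hE (by decide)
              · exact hE (by decide)
            have := step_lemma 36 2 7 (by norm_num) (by norm_num) (by norm_num) m hm7
            calc (m * (3 * (2 * 1))) ^ 2 = 36 * m ^ 2 := by ring
              _ ≤ 2 ^ (2 * (m - 1)) := this
              _ = 2 ^ ((m - 1) * ((3 - 1) * ((2 - 1) * 1))) := by congr 1; omega
          · -- a = 4 : m ≥ 5
            have hm5 : 5 ≤ m := by
              by_contra hcon
              interval_cases m
              exact hE (by decide)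
            have := step_lemma 64 3 5 (by norm_num) (by norm_num) (by norm_num) m hm5
            calc (m * (4 * (2 * 1))) ^ 2 = 64 * m ^ 2 := by ring
              _ ≤ 2 ^ (3 * (m - 1)) := this
              _ = 2 ^ ((m - 1) * ((4 - 1) * ((2 - 1) * 1))) := by congr 1; omega
        · -- a ≥ 5
          have hm5 : 5 ≤ m := le_trans ha5 ham
          have hsa := sq_le_two_pow a (by omega)
          have hsm := sq_le_two_pow m (by omega)
          have hexp : 2 + a + m ≤ (m - 1) * ((a - 1) * ((2 - 1) * 1)) := by
            obtain ⟨x, rfl⟩ : ∃ x, a = x + 5 := ⟨a - 5, by omega⟩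
            obtain ⟨y, rfl⟩ : ∃ y, m = y + 5 := ⟨m - 5, by omega⟩
            have e1 : y + 5 - 1 = y + 4 := by omega
            have e2 : (x + 5 - 1) * ((2 - 1) * 1) = x + 4 := by omega
            rw [e1, e2]
            nlinarith
          calc (m * (a * (2 * 1))) ^ 2 = 2 ^ 2 * (a ^ 2 * m ^ 2) := by ring
            _ ≤ 2 ^ 2 * (2 ^ a * 2 ^ m) :=
                Nat.mul_le_mul_left _ (Nat.mul_le_mul hsa hsm)
            _ = 2 ^ (2 + a + m) := by rw [← pow_add, ← pow_add]; congr 1; omega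
            _ ≤ 2 ^ ((m - 1) * ((a - 1) * ((2 - 1) * 1))) :=
                Nat.pow_le_pow_right (by norm_num) hexp
      · by_cases hsp2 : l'.reverse ∈ Exc
        · -- l' is a (reversed) exception
          simp only [Exc, List.mem_cons, List.mem_singleton, List.not_mem_nil, or_false] at hsp2
          have hrevE : ∀ L : List ℕ, l'.reverse = L → l' = L.reverse := by
            intro L h
            rw [← List.reverse_reverse l', h]
          rcases hsp2 with h | h | h | h | h | h | h | h | h | h
          · -- l' = [3,3], m ≥ 4
            have hl' : l' = [3, 3] := by rw [hrevE _ h]; rfl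
            subst hl'
            have hm4 : 4 ≤ m := by
              by_contra hcon
              interval_cases m
              exact hE (by decide)
            have := step_lemma 81 4 4 (by norm_num) (by norm_num) (by norm_num) m hm4
            calc (m * (3 * (3 * 1))) ^ 2 = 81 * m ^ 2 := by ring
              _ ≤ 2 ^ (4 * (m - 1)) := this
              _ = 2 ^ ((m - 1) * ((3 - 1) * ((3 - 1) * 1))) := by congr 1; omega
          · -- l' = [4,3], m ≥ 4
            have hl' : l' = [4, 3] := by rw [hrevE _ h]; rfl
            subst hl'
            have hm4 : 4 ≤ m := hma 4 (by simp)
            have := step_lemma 144 6 4 (by norm_num) (by norm_num) (by norm_num) m hm4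
            calc (m * (4 * (3 * 1))) ^ 2 = 144 * m ^ 2 := by ring
              _ ≤ 2 ^ (6 * (m - 1)) := this
              _ = 2 ^ ((m - 1) * ((4 - 1) * ((3 - 1) * 1))) := by congr 1; omega
          · -- l' = [3,3,2], m ≥ 5
            have hl' : l' = [3, 3, 2] := by rw [hrevE _ h]; rfl
            subst hl'
            have hm3' : 3 ≤ m := hma 3 (by simp)
            have hm5 : 5 ≤ m := by
              by_contra hcon
              interval_cases m
              · exact hE (by decide)
              · exact hE (by decide)
            have := step_lemma 324 4 5 (by norm_num) (by norm_num) (by norm_num) m hm5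
            calc (m * (3 * (3 * (2 * 1)))) ^ 2 = 324 * m ^ 2 := by ring
              _ ≤ 2 ^ (4 * (m - 1)) := this
              _ = 2 ^ ((m - 1) * ((3 - 1) * ((3 - 1) * ((2 - 1) * 1)))) := by congr 1; omega
          · -- l' = [4,3,2], m ≥ 4
            have hl' : l' = [4, 3, 2] := by rw [hrevE _ h]; rfl
            subst hl'
            have hm4 : 4 ≤ m := hma 4 (by simp)
            have := step_lemma 576 6 4 (by norm_num) (by norm_num) (by norm_num) m hm4
            calc (m * (4 * (3 * (2 * 1)))) ^ 2 = 576 * m ^ 2 := by ring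
              _ ≤ 2 ^ (6 * (m - 1)) := this
              _ = 2 ^ ((m - 1) * ((4 - 1) * ((3 - 1) * ((2 - 1) * 1)))) := by congr 1; omega
          · -- l' = [5,3,2], m ≥ 5
            have hl' : l' = [5, 3, 2] := by rw [hrevE _ h]; rfl
            subst hl'
            have hm5 : 5 ≤ m := hma 5 (by simp)
            have := step_lemma 900 8 5 (by norm_num) (by norm_num) (by norm_num) m hm5
            calc (m * (5 * (3 * (2 * 1)))) ^ 2 = 900 * m ^ 2 := by ring
              _ ≤ 2 ^ (8 * (m - 1)) := this
              _ = 2 ^ ((m - 1) * ((5 - 1) * ((3 - 1) * ((2 - 1) * 1)))) := by congr 1; omega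
          · -- l' = [6,3,2], m ≥ 6
            have hl' : l' = [6, 3, 2] := by rw [hrevE _ h]; rfl
            subst hl'
            have hm6 : 6 ≤ m := hma 6 (by simp)
            have := step_lemma 1296 10 6 (by norm_num) (by norm_num) (by norm_num) m hm6
            calc (m * (6 * (3 * (2 * 1)))) ^ 2 = 1296 * m ^ 2 := by ring
              _ ≤ 2 ^ (10 * (m - 1)) := this
              _ = 2 ^ ((m - 1) * ((6 - 1) * ((3 - 1) * ((2 - 1) * 1)))) := by congr 1; omega
          · -- l' = [4,4,2], m ≥ 4
            have hl' : l' = [4, 4, 2] := by rw [hrevE _ h]; rfl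
            subst hl'
            have hm4 : 4 ≤ m := hma 4 (by simp)
            have := step_lemma 1024 9 4 (by norm_num) (by norm_num) (by norm_num) m hm4
            calc (m * (4 * (4 * (2 * 1)))) ^ 2 = 1024 * m ^ 2 := by ring
              _ ≤ 2 ^ (9 * (m - 1)) := this
              _ = 2 ^ ((m - 1) * ((4 - 1) * ((4 - 1) * ((2 - 1) * 1)))) := by congr 1; omega
          · -- l' = [3,3,3], m ≥ 3
            have hl' : l' = [3, 3, 3] := by rw [hrevE _ h]; rfl
            subst hl'
            have hm3' : 3 ≤ m := hma 3 (by simp)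
            have := step_lemma 729 8 3 (by norm_num) (by norm_num) (by norm_num) m hm3'
            calc (m * (3 * (3 * (3 * 1)))) ^ 2 = 729 * m ^ 2 := by ring
              _ ≤ 2 ^ (8 * (m - 1)) := this
              _ = 2 ^ ((m - 1) * ((3 - 1) * ((3 - 1) * ((3 - 1) * 1)))) := by congr 1; omega
          · -- l' = [3,3,3,2], m ≥ 3
            have hl' : l' = [3, 3, 3, 2] := by rw [hrevE _ h]; rfl
            subst hl'
            have hm3' : 3 ≤ m := hma 3 (by simp)
            have := step_lemma 2916 8 3 (by norm_num) (by norm_num) (by norm_num) m hm3'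
            calc (m * (3 * (3 * (3 * (2 * 1))))) ^ 2 = 2916 * m ^ 2 := by ring
              _ ≤ 2 ^ (8 * (m - 1)) := this
              _ = 2 ^ ((m - 1) * ((3 - 1) * ((3 - 1) * ((3 - 1) * ((2 - 1) * 1))))) := by
                  congr 1; omega
          · -- l' = [4,3,3,2], m ≥ 4
            have hl' : l' = [4, 3, 3, 2] := by rw [hrevE _ h]; rfl
            subst hl'
            have hm4 : 4 ≤ m := hma 4 (by simp)
            have := step_lemma 5184 12 4 (by norm_num) (by norm_num) (by norm_num) m hm4
            calc (m * (4 * (3 * (3 * (2 * 1))))) ^ 2 = 5184 * m ^ 2 := by ring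
              _ ≤ 2 ^ (12 * (m - 1)) := this
              _ = 2 ^ ((m - 1) * ((4 - 1) * ((3 - 1) * ((3 - 1) * ((2 - 1) * 1))))) := by
                  congr 1; omega
        · -- generic case: use the inductive hypothesis
          have h2len' : l'.length = 2 → l'.count 2 = 0 := by
            intro hl
            by_contra hcon
            have : 2 ∈ l' := List.count_pos_iff.mp (by omega)
            exact hsp1 ⟨hl, this⟩
          have ihx := ih hs' hlen' h2' hc' h2len' hsp2
          have hQ2 : 2 ^ (l'.length - 1) ≤ (l'.map (· - 1)).prod := qlb l' hs' h2' hc'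
          have hQ : 2 ≤ (l'.map (· - 1)).prod := by
            calc 2 = 2 ^ 1 := rfl
              _ ≤ 2 ^ (l'.length - 1) := Nat.pow_le_pow_right (by norm_num) (by omega)
              _ ≤ _ := hQ2
          have hm3' : m = 3 → 4 ≤ (l'.map (· - 1)).prod := by
            intro hmm
            have hlen3 : 3 ≤ l'.length := by
              by_contra hcon
              have hl2 : l'.length = 2 := by omega
              obtain ⟨a, c, rfl⟩ := List.length_eq_two.mp hl2
              have ha2 : 2 ≤ a := h2' a (by simp)
              have hc2 : 2 ≤ c := h2' c (by simp)
              have ham : a ≤ m := hma a (by simp)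
              have hcm : c ≤ m := hma c (by simp)
              have hna : a ≠ 2 := fun hh => hsp1 ⟨hl2, by rw [hh]; simp⟩
              have hnc : c ≠ 2 := fun hh => hsp1 ⟨hl2, by rw [hh]; simp⟩
              have ha3 : a = 3 := by omega
              have hc3 : c = 3 := by omega
              subst ha3; subst hc3
              exact hsp2 (by decide)
            calc 4 = 2 ^ 2 := rfl
              _ ≤ 2 ^ (l'.length - 1) := Nat.pow_le_pow_right (by norm_num) (by omega)
              _ ≤ _ := hQ2
          exact append_lemma l'.prod ((l'.map (· - 1)).prod) m ihx hQ hm3 hm3'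

theorem log_ineq_exceptions (t : ℕ) (ht : 2 ≤ t) (n : Fin t → ℕ)
    (hmono : Monotone n)
    (hn0 : 2 ≤ n ⟨0, by omega⟩)
    (hn1 : 3 ≤ n ⟨1, by omega⟩)
    (ht2 : t = 2 → 3 ≤ n ⟨0, by omega⟩)
    (hexc : List.ofFn n ∉
      ([[3, 3], [3, 4],
        [2, 3, 3], [2, 3, 4], [2, 3, 5], [2, 3, 6], [2, 4, 4], [3, 3, 3],
        [2, 3, 3, 3], [2, 3, 3, 4]] : List (List ℕ))) :
    2 * Real.logb 2 (∏ i, (n i : ℝ)) ≤ ∏ i, ((n i : ℝ) - 1) := by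
  obtain ⟨k, rfl⟩ : ∃ k, t = k + 2 := ⟨t - 2, by omega⟩
  have hall2 : ∀ i : Fin (k + 2), 2 ≤ n i := by
    intro i
    calc 2 ≤ n ⟨0, by omega⟩ := hn0
      _ ≤ n i := hmono (by simp [Fin.le_def])
  have htail3 : ∀ i : Fin (k + 2), 1 ≤ (i : ℕ) → 3 ≤ n i := by
    intro i hi
    calc 3 ≤ n ⟨1, by omega⟩ := hn1
      _ ≤ n i := hmono (by simp only [Fin.le_def]; omega)
  set l : List ℕ := (List.ofFn n).reverse with hl
  have hsort : l.Pairwise (· ≥ ·) := by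
    rw [hl]
    exact List.pairwise_reverse.mpr (hmono.sortedLE_ofFn.pairwise)
  have hlen : 2 ≤ l.length := by simp [hl]
  have hmem : ∀ x ∈ l, 2 ≤ x := by
    intro x hx
    rw [hl, List.mem_reverse] at hx
    obtain ⟨i, rfl⟩ := List.mem_ofFn.mp hx
    exact hall2 i
  have hcount_ofFn : (List.ofFn n).count 2 ≤ 1 := by
    rw [List.ofFn_succ, List.count_cons]
    have hz : (List.ofFn fun i : Fin (k + 1) => n i.succ).count 2 = 0 := by
      apply List.count_eq_zero.mpr
      intro hmem2
      obtain ⟨i, hi⟩ := List.mem_ofFn.mp hmem2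
      have h3s := htail3 i.succ (by simp)
      have hi' : n i.succ = 2 := hi
      omega
    rw [hz]
    split <;> simp
  have hcount : l.count 2 ≤ 1 := by
    rw [hl, List.count_reverse]
    exact hcount_ofFn
  have h2len : l.length = 2 → l.count 2 = 0 := by
    intro hll
    have hk0 : k = 0 := by
      simp [hl] at hll
      omega
    subst hk0
    rw [hl, List.count_reverse]
    apply List.count_eq_zero.mpr
    intro hmem2
    obtain ⟨i, hi⟩ := List.mem_ofFn.mp hmem2
    have h3 : 3 ≤ n i := by
      rcases Nat.lt_or_ge (i : ℕ) 1 with hlt | hge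
      · have hv : (i : ℕ) = 0 := by omega
        have hieq : i = ⟨0, by omega⟩ := Fin.ext (by simp [hv])
        rw [hieq]
        exact ht2 rfl
      · exact htail3 i hge
    omega
  have hrevE : l.reverse ∉ Exc := by
    rw [hl, List.reverse_reverse]
    exact hexc
  have hnat := key_lemma l hsort hlen hmem hcount h2len hrevE
  have hprod : l.prod = ∏ i, n i := by
    rw [hl, List.prod_reverse, List.prod_ofFn]
  have hmapprod : (l.map (· - 1)).prod = ∏ i, (n i - 1) := by
    rw [hl, List.map_reverse, List.prod_reverse, List.map_ofFn, List.prod_ofFn]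
    rfl
  rw [hprod, hmapprod] at hnat
  have hP1 : 1 ≤ ∏ i, n i := Finset.one_le_prod' fun i _ => by have := hall2 i; omega
  have hcast1 : ∏ i, ((n i : ℝ)) = ((∏ i, n i : ℕ) : ℝ) := by push_cast; ring
  have hcast2 : ∏ i, ((n i : ℝ) - 1) = ((∏ i, (n i - 1) : ℕ) : ℝ) := by
    rw [Nat.cast_prod]
    apply Finset.prod_congr rfl
    intro i _
    have := hall2 i
    rw [Nat.cast_sub (by omega)]
    norm_num
  rw [hcast1, hcast2]
  set P : ℕ := ∏ i, n i with hPdef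
  set Q : ℕ := ∏ i, (n i - 1) with hQdef
  have hPpos : (0 : ℝ) < (P : ℝ) := by
    have : 0 < P := lt_of_lt_of_le Nat.zero_lt_one hP1
    exact_mod_cast this
  have hlog : 2 * Real.logb 2 (P : ℝ) = Real.logb 2 ((P : ℝ) ^ 2) := by
    rw [Real.logb_pow]
    norm_num
  rw [hlog]
  have hle : ((P : ℝ)) ^ 2 ≤ (2 : ℝ) ^ Q := by exact_mod_cast hnat
  calc Real.logb 2 ((P : ℝ) ^ 2) ≤ Real.logb 2 ((2 : ℝ) ^ Q) :=
      Real.logb_le_logb_of_le (by norm_num) (pow_pos hPpos 2) hle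
    _ = Q * Real.logb 2 2 := Real.logb_pow 2 2 Q
    _ = Q := by rw [Real.logb_self_eq_one (by norm_num)]; ring
end

section
/- Let G be a graph on n vertices with upper domination number Γ(G). For every i ≥ (n + Γ(G) − 1)/2, we have d_i(G) ≥ d_{i+1}(G). -/
open Finset

/-- A minimal dominating set: dominating, with no proper subset dominating. -/
def MinimalDominating {V : Type*} (G : SimpleGraph V) (U : Finset V) : Prop :=
  Dominates G U ∧ ∀ W ⊂ U, ¬ Dominates G W

/-- The upper domination number: the maximum size of a minimal dominating set. -/
noncomputable def upperDom {V : Type*} [Fintype V] (G : SimpleGraph V) : ℕ :=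
  sSup {k : ℕ | ∃ U : Finset V, U.card = k ∧ MinimalDominating G U}

lemma dominates_mono {V : Type*} {G : SimpleGraph V} {B A : Finset V}
    (h : B ⊆ A) (hB : Dominates G B) : Dominates G A := by
  intro v
  rcases hB v with hv | ⟨u, hu, hadj⟩
  · exact Or.inl (h hv)
  · exact Or.inr ⟨u, h hu, hadj⟩

lemma exists_minimal_subset {V : Type*} (G : SimpleGraph V) :
    ∀ A : Finset V, Dominates G A → ∃ M, M ⊆ A ∧ MinimalDominating G M := by
  intro A
  induction A using Finset.strongInductionOn with
  | _ A ih =>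
    intro hA
    by_cases h : ∀ W ⊂ A, ¬ Dominates G W
    · exact ⟨A, subset_rfl, hA, h⟩
    · push_neg at h
      obtain ⟨W, hW, hWd⟩ := h
      obtain ⟨M, hM, hMd⟩ := ih W hW hWd
      exact ⟨M, hM.trans hW.subset, hMd⟩

lemma card_le_upperDom {V : Type*} [Fintype V] {G : SimpleGraph V} {U : Finset V}
    (h : MinimalDominating G U) : U.card ≤ upperDom G := by
  apply le_csSup
  · exact ⟨Fintype.card V, fun k ⟨W, hW, _⟩ => hW ▸ Finset.card_le_univ W⟩
  · exact ⟨U, rfl, h⟩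

lemma upperDom_le_card {V : Type*} [Fintype V] (G : SimpleGraph V) :
    upperDom G ≤ Fintype.card V := by
  have hne : {k : ℕ | ∃ U : Finset V, U.card = k ∧ MinimalDominating G U}.Nonempty := by
    have huniv : Dominates G (Finset.univ : Finset V) := fun v => Or.inl (mem_univ v)
    obtain ⟨M, _, hM⟩ := exists_minimal_subset G Finset.univ huniv
    exact ⟨M.card, M, rfl, hM⟩
  exact csSup_le hne (fun k ⟨W, hW, _⟩ => hW ▸ Finset.card_le_univ W)

theorem domCount_decreasing_of_upperDom {V : Type*} [Fintype V] (G : SimpleGraph V) (i : ℕ)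
    (hi : ((Fintype.card V : ℝ) + (upperDom G : ℝ) - 1) / 2 ≤ (i : ℝ)) :
    domCount G (i + 1) ≤ domCount G i := by
  classical
  set n := Fintype.card V with hn
  set Γ := upperDom G with hΓ
  -- numeric facts
  have hsum : n + Γ ≤ 2 * i + 1 := by
    have : (n : ℝ) + Γ ≤ 2 * i + 1 := by linarith
    exact_mod_cast this
  have hΓn : Γ ≤ n := upperDom_le_card G
  have hΓi : Γ ≤ i := by omega
  -- finset versions of domCount
  set D : ℕ → Finset (Finset V) :=
    fun j => Finset.univ.filter (fun U : Finset V => U.card = j ∧ Dominates G U) with hD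
  have hcount : ∀ j, domCount G j = (D j).card := by
    intro j
    rw [domCount, Nat.card_eq_fintype_card, Fintype.card_subtype]
  -- lower bound: each A in D (i+1) has ≥ i+1-Γ dominating subsets of size i
  have hlow : ∀ A ∈ D (i + 1), i + 1 - Γ ≤ ((D i).filter (fun B => B ⊆ A)).card := by
    intro A hA
    rw [hD, mem_filter] at hA
    obtain ⟨-, hAcard, hAdom⟩ := hA
    obtain ⟨M, hMA, hMmin⟩ := exists_minimal_subset G A hAdom
    have hMΓ : M.card ≤ Γ := card_le_upperDom hMmin
    have hinj : Set.InjOn (fun x => A.erase x) (A \ M : Finset V) := by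
      intro x hx y hy hxy
      by_contra hne
      have hyA : y ∈ A := (mem_sdiff.mp hy).1
      have : y ∈ A.erase x := Finset.mem_erase.mpr ⟨Ne.symm hne, hyA⟩
      simp only at hxy
      rw [hxy] at this
      exact (Finset.notMem_erase y A) this
    have hmaps : ∀ x ∈ (A \ M : Finset V),
        A.erase x ∈ (D i).filter (fun B => B ⊆ A) := by
      intro x hx
      rw [mem_sdiff] at hx
      rw [mem_filter, hD, mem_filter]
      refine ⟨⟨mem_univ _, ?_, ?_⟩, Finset.erase_subset x A⟩
      · rw [Finset.card_erase_of_mem hx.1, hAcard]; omega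
      · exact dominates_mono (fun y hy =>
          Finset.mem_erase.mpr ⟨fun h => hx.2 (h ▸ hy), hMA hy⟩) hMmin.1
    have hcard : (A \ M).card ≤ ((D i).filter (fun B => B ⊆ A)).card :=
      Finset.card_le_card_of_injOn _ hmaps hinj
    have : (A \ M).card = (i + 1) - M.card := by
      rw [Finset.card_sdiff_of_subset hMA, hAcard]
    omega
  -- upper bound: each B in D i has ≤ n - i supersets of size i+1
  have hup : ∀ B ∈ D i, ((D (i + 1)).filter (fun A => B ⊆ A)).card ≤ n - i := by
    intro B hB
    rw [hD, mem_filter] at hB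
    obtain ⟨-, hBcard, -⟩ := hB
    have hinj : Set.InjOn (fun A => A \ B)
        (((D (i + 1)).filter (fun A => B ⊆ A)) : Finset (Finset V)) := by
      intro A1 h1 A2 h2 h12
      rw [Finset.coe_filter] at h1 h2
      have hB1 : B ⊆ A1 := h1.2
      have hB2 : B ⊆ A2 := h2.2
      have e1 : B ∪ A1 \ B = A1 := Finset.union_sdiff_of_subset hB1
      have e2 : B ∪ A2 \ B = A2 := Finset.union_sdiff_of_subset hB2
      rw [← e1, ← e2]
      simp only at h12
      rw [h12]
    have hmaps : ∀ A ∈ (D (i + 1)).filter (fun A => B ⊆ A),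
        A \ B ∈ Finset.powersetCard 1 (Finset.univ \ B) := by
      intro A hA
      rw [mem_filter, hD, mem_filter] at hA
      obtain ⟨⟨-, hAcard, -⟩, hBA⟩ := hA
      rw [Finset.mem_powersetCard]
      constructor
      · exact Finset.sdiff_subset_sdiff (Finset.subset_univ A) subset_rfl
      · rw [Finset.card_sdiff_of_subset hBA, hAcard, hBcard]; omega
    have := Finset.card_le_card_of_injOn _ hmaps hinj
    rwa [Finset.card_powersetCard, Finset.card_sdiff_of_subset (Finset.subset_univ B),
      Finset.card_univ, hBcard, Nat.choose_one_right] at this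
  -- double counting
  have hswap :
      ∑ A ∈ D (i + 1), ((D i).filter (fun B => B ⊆ A)).card
        = ∑ B ∈ D i, ((D (i + 1)).filter (fun A => B ⊆ A)).card := by
    simp only [Finset.card_filter]
    rw [Finset.sum_comm]
  have h1 : (D (i + 1)).card * (i + 1 - Γ)
      ≤ ∑ A ∈ D (i + 1), ((D i).filter (fun B => B ⊆ A)).card := by
    calc (D (i + 1)).card * (i + 1 - Γ) = ∑ _A ∈ D (i + 1), (i + 1 - Γ) := by
          rw [Finset.sum_const, smul_eq_mul]
      _ ≤ _ := Finset.sum_le_sum hlow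
  have h2 : ∑ B ∈ D i, ((D (i + 1)).filter (fun A => B ⊆ A)).card
      ≤ (D i).card * (n - i) := by
    calc _ ≤ ∑ _B ∈ D i, (n - i) := Finset.sum_le_sum hup
      _ = (D i).card * (n - i) := by rw [Finset.sum_const, smul_eq_mul]
  have hkey : (D (i + 1)).card * (i + 1 - Γ) ≤ (D i).card * (i + 1 - Γ) := by
    have hni : n - i ≤ i + 1 - Γ := by omega
    calc (D (i + 1)).card * (i + 1 - Γ) ≤ (D i).card * (n - i) := by
          rw [hswap] at h1; exact h1.trans h2
      _ ≤ (D i).card * (i + 1 - Γ) := Nat.mul_le_mul_left _ hni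
  have hpos : 0 < i + 1 - Γ := by omega
  rw [hcount, hcount]
  exact Nat.le_of_mul_le_mul_right hkey hpos
end

section
/- Let G be a graph on n vertices. If n is odd and Γ(G) ≤ 4, or n is even and Γ(G) ≤ 3, then the domination polynomial of G is unimodal with a mode at ⌈n/2⌉ or ⌈n/2⌉+1. -/
open Finset

section aux

variable {V : Type*} [Fintype V] [DecidableEq V] (G : SimpleGraph V)

open Classical in
/-- The finset of dominating sets of size `i`. -/
noncomputable def domFinset (i : ℕ) : Finset (Finset V) :=
  Finset.univ.filter (fun U => U.card = i ∧ Dominates G U)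

open Classical in
lemma domCount_eq (i : ℕ) : domCount G i = (domFinset G i).card := by
  rw [domCount, Nat.card_eq_fintype_card, domFinset, ← Fintype.card_coe]
  exact Fintype.card_congr (Equiv.subtypeEquivRight (by simp))

lemma mem_domFinset {i : ℕ} {U : Finset V} :
    U ∈ domFinset G i ↔ U.card = i ∧ Dominates G U := by
  classical simp [domFinset]

lemma dominates_mono_s16 {U W : Finset V} (hUW : U ⊆ W) (hU : Dominates G U) :
    Dominates G W := by
  intro v
  rcases hU v with hv | ⟨u, hu, huv⟩
  · exact Or.inl (hUW hv)
  · exact Or.inr ⟨u, hUW hu, huv⟩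

lemma exists_minimal {U : Finset V} (hU : Dominates G U) :
    ∃ W ⊆ U, MinimalDominating G W := by
  induction U using Finset.strongInduction with
  | _ U ih =>
    by_cases hmin : ∀ W ⊂ U, ¬ Dominates G W
    · exact ⟨U, Finset.Subset.refl U, hU, hmin⟩
    · push_neg at hmin
      obtain ⟨W, hWU, hW⟩ := hmin
      obtain ⟨X, hXW, hX⟩ := ih W hWU hW
      exact ⟨X, hXW.trans hWU.subset, hX⟩

lemma card_le_upperDom_s16 {W : Finset V} (hW : MinimalDominating G W) :
    W.card ≤ upperDom G := by
  apply le_csSup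
  · exact ⟨Fintype.card V, fun k ⟨U, hU, _⟩ => hU ▸ Finset.card_le_univ U⟩
  · exact ⟨W, rfl, hW⟩

open Classical in
/-- d_i ≤ d_{i+1} for 2i < n. -/
lemma domCount_le_succ {i : ℕ} (hi : 2 * i < Fintype.card V) :
    domCount G i ≤ domCount G (i + 1) := by
  rw [domCount_eq, domCount_eq]
  have key : (domFinset G i).card * (Fintype.card V - i) ≤
      (domFinset G (i+1)).card * (i + 1) := by
    apply Finset.card_mul_le_card_mul (fun S T => S ⊆ T)
    · intro S hS
      rw [mem_domFinset] at hS
      have himg : (Finset.univ \ S).image (fun v => insert v S) ⊆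
          Finset.bipartiteAbove (fun S T => S ⊆ T) (domFinset G (i+1)) S := by
        intro T hT
        simp only [Finset.mem_image, Finset.mem_sdiff] at hT
        obtain ⟨v, ⟨_, hv⟩, rfl⟩ := hT
        rw [Finset.mem_bipartiteAbove, mem_domFinset]
        exact ⟨⟨by rw [Finset.card_insert_of_notMem hv, hS.1],
          dominates_mono_s16 G (Finset.subset_insert v S) hS.2⟩, Finset.subset_insert v S⟩
      calc Fintype.card V - i = (Finset.univ \ S).card := by
              rw [Finset.card_sdiff_of_subset (Finset.subset_univ S), Finset.card_univ, hS.1]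
        _ = ((Finset.univ \ S).image (fun v => insert v S)).card := by
              rw [Finset.card_image_of_injOn]
              intro a ha b hb hab
              simp only [Finset.mem_coe, Finset.mem_sdiff] at ha hb
              simp only at hab
              have : a ∈ insert b S := hab ▸ Finset.mem_insert_self a S
              rcases Finset.mem_insert.mp this with h | h
              · exact h
              · exact absurd h ha.2
        _ ≤ _ := Finset.card_le_card himg
    · intro T hT
      rw [mem_domFinset] at hT
      calc (Finset.bipartiteBelow (fun S T => S ⊆ T) (domFinset G i) T).card
          ≤ (Finset.powersetCard i T).card := by
            apply Finset.card_le_card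
            intro S hS
            rw [Finset.mem_bipartiteBelow] at hS
            rw [Finset.mem_powersetCard]
            exact ⟨hS.2, (mem_domFinset G).mp hS.1 |>.1⟩
        _ = (i + 1).choose i := by rw [Finset.card_powersetCard, hT.1]
        _ = i + 1 := Nat.choose_succ_self_right i
  have h1 : i + 1 ≤ Fintype.card V - i := by omega
  have h2 : 0 < Fintype.card V - i := by omega
  nlinarith [Nat.mul_le_mul_left (domFinset G (i+1)).card h1]

open Classical in
/-- d_{i+1} ≤ d_i for 2i + 1 ≥ n + Γ. -/
lemma domCount_succ_le {i : ℕ} (hi : Fintype.card V + upperDom G ≤ 2 * i + 1) :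
    domCount G (i + 1) ≤ domCount G i := by
  rcases le_or_gt (Fintype.card V) i with hn | hn
  · rw [domCount_eq]
    have : domFinset G (i+1) = ∅ := by
      rw [Finset.eq_empty_iff_forall_notMem]
      intro U hU
      rw [mem_domFinset] at hU
      have := Finset.card_le_univ U
      rw [hU.1] at this
      omega
    simp [this]
  rw [domCount_eq, domCount_eq]
  set Γ := upperDom G with hΓ
  have hΓi : Γ ≤ i := by omega
  have key : (domFinset G (i+1)).card * (i + 1 - Γ) ≤
      (domFinset G i).card * (Fintype.card V - i) := by
    apply Finset.card_mul_le_card_mul (fun T S => S ⊆ T)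
    · intro T hT
      rw [mem_domFinset] at hT
      obtain ⟨W, hWT, hW⟩ := exists_minimal G hT.2
      have hWcard : W.card ≤ Γ := card_le_upperDom_s16 G hW
      have himg : (T \ W).image (fun v => T.erase v) ⊆
          Finset.bipartiteAbove (fun T S => S ⊆ T) (domFinset G i) T := by
        intro S hS
        simp only [Finset.mem_image, Finset.mem_sdiff] at hS
        obtain ⟨v, ⟨hvT, hvW⟩, rfl⟩ := hS
        rw [Finset.mem_bipartiteAbove, mem_domFinset]
        refine ⟨⟨by rw [Finset.card_erase_of_mem hvT, hT.1]; rfl, ?_⟩,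
          Finset.erase_subset v T⟩
        exact dominates_mono_s16 G (fun x hx => Finset.mem_erase.mpr
          ⟨fun hxv => hvW (hxv ▸ hx), hWT hx⟩) hW.1
      calc i + 1 - Γ ≤ (T \ W).card := by
              rw [Finset.card_sdiff_of_subset hWT, hT.1]; omega
        _ = ((T \ W).image (fun v => T.erase v)).card := by
              rw [Finset.card_image_of_injOn]
              intro a ha b hb hab
              simp only [Finset.mem_coe, Finset.mem_sdiff] at ha
              simp only at hab
              by_contra hne
              have h1 : a ∈ T.erase b := Finset.mem_erase.mpr ⟨hne, ha.1⟩
              rw [← hab] at h1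
              exact Finset.notMem_erase a T h1
        _ ≤ _ := Finset.card_le_card himg
    · intro S hS
      rw [mem_domFinset] at hS
      have himg : Finset.bipartiteBelow (fun T S => S ⊆ T) (domFinset G (i+1)) S ⊆
          (Finset.univ \ S).image (fun v => insert v S) := by
        intro T hT
        rw [Finset.mem_bipartiteBelow, mem_domFinset] at hT
        obtain ⟨⟨hTcard, _⟩, hST⟩ := hT
        have hcard : (T \ S).card = 1 := by
          rw [Finset.card_sdiff_of_subset hST, hTcard, hS.1]; omega
        obtain ⟨v, hv⟩ := Finset.card_eq_one.mp hcard
        have hveq : T = insert v S := by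
          apply Finset.Subset.antisymm
          · intro x hx
            by_cases hxS : x ∈ S
            · exact Finset.mem_insert_of_mem hxS
            · have : x ∈ T \ S := Finset.mem_sdiff.mpr ⟨hx, hxS⟩
              rw [hv, Finset.mem_singleton] at this
              exact this ▸ Finset.mem_insert_self x S
          · apply Finset.insert_subset _ hST
            have : v ∈ T \ S := hv ▸ Finset.mem_singleton_self v
            exact (Finset.mem_sdiff.mp this).1
        rw [Finset.mem_image]
        have hvS : v ∉ S := by
          have : v ∈ T \ S := hv ▸ Finset.mem_singleton_self v
          exact (Finset.mem_sdiff.mp this).2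
        exact ⟨v, Finset.mem_sdiff.mpr ⟨Finset.mem_univ v, hvS⟩, hveq.symm⟩
      calc (Finset.bipartiteBelow (fun T S => S ⊆ T) (domFinset G (i+1)) S).card
          ≤ ((Finset.univ \ S).image (fun v => insert v S)).card :=
            Finset.card_le_card himg
        _ ≤ (Finset.univ \ S).card := Finset.card_image_le
        _ = Fintype.card V - i := by
            rw [Finset.card_sdiff_of_subset (Finset.subset_univ S), Finset.card_univ, hS.1]
  have h1 : Fintype.card V - i ≤ i + 1 - Γ := by omega
  have h2 : 0 < Fintype.card V - i := by omega
  nlinarith [Nat.mul_le_mul_left (domFinset G (i+1)).card h1]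

end aux

theorem unimodal_of_low_upperDom {V : Type*} [Fintype V] (G : SimpleGraph V)
    (h : (Odd (Fintype.card V) ∧ upperDom G ≤ 4) ∨
      (Even (Fintype.card V) ∧ upperDom G ≤ 3)) :
    UnimodalWithMode (domCount G) ((Fintype.card V + 1) / 2) ∨
      UnimodalWithMode (domCount G) ((Fintype.card V + 1) / 2 + 1) := by
  classical
  set n := Fintype.card V with hn
  set k := (n + 1) / 2 with hk
  have hinc : ∀ i < k, domCount G i ≤ domCount G (i + 1) := by
    intro i hik
    exact domCount_le_succ G (by omega)
  have hdec : ∀ i, k + 1 ≤ i → domCount G (i + 1) ≤ domCount G i := by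
    intro i hik
    apply domCount_succ_le G
    rcases h with ⟨ho, hΓ⟩ | ⟨he, hΓ⟩
    · obtain ⟨m, hm⟩ := ho; omega
    · obtain ⟨m, hm⟩ := he; omega
  rcases le_total (domCount G (k + 1)) (domCount G k) with hc | hc
  · left
    refine ⟨hinc, fun i hik => ?_⟩
    rcases eq_or_lt_of_le hik with rfl | hlt
    · exact hc
    · exact hdec i hlt
  · right
    refine ⟨fun i hik => ?_, hdec⟩
    rcases Nat.lt_succ_iff_lt_or_eq.mp hik with hlt | rfl
    · exact hinc i hlt
    · exact hc
end

section
/- Let G be a graph on n vertices, m of which are universal vertices, and let w_m be the smallest positive real root of f_m(x) = x^{m+1} − x^m − 2x + 1. Then d_i(G) ≥ d_{i+1}(G) for all i ≥ (1 − w_m)·n. -/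
/-- The number of universal vertices of `G`, i.e. vertices adjacent to every other vertex. -/
noncomputable def universalCount {V : Type*} [Fintype V] (G : SimpleGraph V) : ℕ :=
  Nat.card {v : V // ∀ u : V, u ≠ v → G.Adj v u}


/-- key step: `n * C(k-1, i) ≤ (n-i) * C(k, i)` for `k ≤ n`. -/
lemma step_lemma_s17 (n k i : ℕ) (hk : k ≤ n) :
    n * Nat.choose (k - 1) i ≤ (n - i) * Nat.choose k i := by
  rcases le_or_gt k i with hki | hik
  · rcases Nat.eq_or_lt_of_le hki with h | h
    · subst h
      rcases Nat.eq_zero_or_pos k with h0 | h0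
      · subst h0; simp
      · have : k - 1 < k := by omega
        rw [Nat.choose_eq_zero_of_lt this]; simp
    · rw [Nat.choose_eq_zero_of_lt (by omega : k - 1 < i)]; simp
  · -- i < k ≤ n
    have hk1 : 1 ≤ k := by omega
    have hid : k * Nat.choose (k - 1) i = (k - i) * Nat.choose k i := by
      obtain ⟨j, rfl⟩ : ∃ j, k = j + 1 := ⟨k - 1, by omega⟩
      simp only [Nat.add_sub_cancel]
      rw [mul_comm (j + 1 - i)]
      calc (j + 1) * Nat.choose j i = Nat.succ j * Nat.choose j i := rfl
        _ = Nat.choose (Nat.succ j) (Nat.succ i) * Nat.succ i := Nat.add_one_mul_choose_eq j i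
        _ = Nat.choose (j + 1) (i + 1) * (i + 1) := rfl
        _ = Nat.choose (j + 1) i * (j + 1 - i) := Nat.choose_succ_right_eq (j + 1) i
    have hmul : k * (n * Nat.choose (k - 1) i) ≤ k * ((n - i) * Nat.choose k i) := by
      calc k * (n * Nat.choose (k - 1) i) = n * (k * Nat.choose (k - 1) i) := by ring
        _ = n * ((k - i) * Nat.choose k i) := by rw [hid]
        _ = (n * (k - i)) * Nat.choose k i := by ring
        _ ≤ (k * (n - i)) * Nat.choose k i := by
            apply Nat.mul_le_mul_right
            rw [Nat.mul_sub, Nat.mul_sub, mul_comm k n]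
            exact Nat.sub_le_sub_left (Nat.mul_le_mul_right i hk) (n * k)
        _ = k * ((n - i) * Nat.choose k i) := by ring
    exact Nat.le_of_mul_le_mul_left hmul (by omega)

lemma choose_pow_le (n i m : ℕ) : (n - m).choose i * n ^ m ≤ n.choose i * (n - i) ^ m := by
  induction m with
  | zero => simp
  | succ m ih =>
    have hstep := step_lemma_s17 n (n - m) i (Nat.sub_le n m)
    have : n - (m + 1) = (n - m) - 1 := by omega
    calc (n - (m + 1)).choose i * n ^ (m + 1)
        = (n * ((n - m - 1).choose i)) * n ^ m := by rw [this]; ring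
      _ ≤ ((n - i) * (n - m).choose i) * n ^ m := Nat.mul_le_mul_right _ hstep
      _ = (n - i) * ((n - m).choose i * n ^ m) := by ring
      _ ≤ (n - i) * (n.choose i * (n - i) ^ m) := Nat.mul_le_mul_left _ ih
      _ = n.choose i * (n - i) ^ (m + 1) := by ring


lemma root_facts (m : ℕ) (hm : 1 ≤ m) (w : ℝ) (hw_pos : 0 < w)
    (hw_min : ∀ x : ℝ, 0 < x → x ^ (m + 1) - x ^ m - 2 * x + 1 = 0 → w ≤ x) :
    w < 1/2 ∧ ∀ t : ℝ, 0 ≤ t → t ≤ w → 0 ≤ t ^ (m + 1) - t ^ m - 2 * t + 1 := by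
  set f : ℝ → ℝ := fun x => x ^ (m + 1) - x ^ m - 2 * x + 1 with hf
  have hcont : Continuous f := by continuity
  have hf0 : f 0 = 1 := by
    simp [hf, zero_pow (by omega : m ≠ 0), zero_pow (by omega : m + 1 ≠ 0)]
  have hfhalf : f (1/2) < 0 := by
    have h1 : ((1:ℝ)/2) ^ (m + 1) < (1/2) ^ m :=
      pow_lt_pow_right_of_lt_one₀ (by norm_num) (by norm_num) (by omega)
    simp only [hf]
    nlinarith
  have hw2 : w < 1/2 := by
    have hsub := intermediate_value_Icc' (by norm_num : (0:ℝ) ≤ 1/2) hcont.continuousOn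
    have h0mem : (0:ℝ) ∈ Set.Icc (f (1/2)) (f 0) := ⟨hfhalf.le, by rw [hf0]; norm_num⟩
    obtain ⟨c, hc, hfc⟩ := hsub h0mem
    have hc0 : c ≠ 0 := by intro h; rw [h, hf0] at hfc; norm_num at hfc
    have hch : c ≠ 1/2 := by intro h; rw [h] at hfc; rw [hfc] at hfhalf; norm_num at hfhalf
    have : w ≤ c := hw_min c (lt_of_le_of_ne hc.1 (Ne.symm hc0)) hfc
    have : c < 1/2 := lt_of_le_of_ne hc.2 hch
    linarith
  refine ⟨hw2, fun t ht0 htw => ?_⟩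
  by_contra h
  push_neg at h
  have hsub := intermediate_value_Icc' ht0 hcont.continuousOn
  have h0mem : (0:ℝ) ∈ Set.Icc (f t) (f 0) := ⟨h.le, by rw [hf0]; norm_num⟩
  obtain ⟨c, hc, hfc⟩ := hsub h0mem
  have hc0 : c ≠ 0 := by intro heq; rw [heq, hf0] at hfc; norm_num at hfc
  have hct : c ≠ t := by intro heq; rw [heq] at hfc; have ht : f t < 0 := h; rw [hfc] at ht; norm_num at ht
  have h1 : w ≤ c := hw_min c (lt_of_le_of_ne hc.1 (Ne.symm hc0)) hfc
  have h2 : c < t := lt_of_le_of_ne hc.2 hct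
  linarith



lemma key_choose (n i m : ℕ) (w : ℝ) (hm : 1 ≤ m) (hmn : m ≤ n) (hw0 : 0 < w) (hw2 : w < 1/2)
    (hfnn : ∀ t : ℝ, 0 ≤ t → t ≤ w → 0 ≤ t ^ (m + 1) - t ^ m - 2 * t + 1)
    (hiw : (1 - w) * (n : ℝ) ≤ (i : ℝ)) :
    n.choose (i + 1) + (n - m).choose i ≤ n.choose i := by
  rcases le_or_gt n i with hni | hin
  · have h1 : n.choose (i + 1) = 0 := Nat.choose_eq_zero_of_lt (by omega)
    have h2 : (n - m).choose i = 0 := Nat.choose_eq_zero_of_lt (by omega)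
    simp [h1, h2]
  · have hn1 : 1 ≤ n := le_trans hm hmn
    have hNpos : (0:ℝ) < n := by exact_mod_cast Nat.pos_of_ne_zero (by omega)
    have hi1 : 1 ≤ i := by
      by_contra h
      have hi0 : i = 0 := by omega
      rw [hi0] at hiw
      push_cast at hiw
      nlinarith
    have hIpos : (0:ℝ) < i := by exact_mod_cast Nat.pos_of_ne_zero (by omega)
    have hNI : (i:ℝ) < n := by exact_mod_cast hin
    have hINpos : (0:ℝ) < (n:ℝ) - i := by linarith
    -- cast identities
    have hA : ((i:ℝ) + 1) * (n.choose (i + 1) : ℝ) = ((n:ℝ) - i) * (n.choose i : ℝ) := by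
      have h := congrArg (Nat.cast : ℕ → ℝ) (Nat.choose_succ_right_eq n i)
      push_cast [Nat.cast_sub hin.le] at h
      linarith
    have hB : ((n - m).choose i : ℝ) * (n:ℝ) ^ m ≤ (n.choose i : ℝ) * ((n:ℝ) - i) ^ m := by
      have h := (Nat.cast_le (α := ℝ)).mpr (choose_pow_le n i m)
      push_cast [Nat.cast_sub hin.le] at h
      convert h using 2
    set t : ℝ := ((n:ℝ) - i) / n with hdt
    clear_value t
    have ht0 : 0 < t := hdt ▸ div_pos hINpos hNpos
    have htw : t ≤ w := by
      rw [hdt, div_le_iff₀ hNpos]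
      nlinarith
    have hf := hfnn t ht0.le htw
    have h1t : (0:ℝ) < 1 - t := by
      have : t < 1/2 := lt_of_le_of_lt htw hw2
      linarith
    have hC : (0:ℝ) < (n.choose i : ℝ) := by
      exact_mod_cast Nat.choose_pos hin.le
    -- B ≤ C * t^m
    have htm : ((n:ℝ) - i) ^ m = t ^ m * (n:ℝ) ^ m := by
      rw [hdt, div_pow]
      field_simp
    have hB' : ((n - m).choose i : ℝ) ≤ (n.choose i : ℝ) * t ^ m := by
      have hNm : (0:ℝ) < (n:ℝ) ^ m := pow_pos hNpos m
      rw [htm, ← mul_assoc] at hB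
      exact le_of_mul_le_mul_right hB hNm
    -- A ≤ C * (t / (1 - t))
    have h1t' : 1 - t = (i:ℝ) / n := by
      rw [hdt]; field_simp; ring
    have hfrac : t / (1 - t) = ((n:ℝ) - i) / i := by
      rw [h1t', hdt]
      field_simp
    have hA' : (n.choose (i+1) : ℝ) ≤ (n.choose i : ℝ) * (t / (1 - t)) := by
      rw [hfrac, ← mul_div_assoc, le_div_iff₀ hIpos]
      have hC' : (0:ℝ) ≤ (n.choose (i+1) : ℝ) := Nat.cast_nonneg _
      nlinarith [hA, hC']
    -- t^m ≤ (1 - 2t)/(1 - t)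
    have htmb : t ^ m ≤ (1 - 2*t) / (1 - t) := by
      rw [le_div_iff₀ h1t]
      have hp : t ^ (m + 1) = t ^ m * t := pow_succ t m
      nlinarith [hf]
    have hsum : t / (1 - t) + (1 - 2*t) / (1 - t) = 1 := by
      rw [← add_div]
      field_simp
      ring
    -- combine
    have hreal : (n.choose (i+1) : ℝ) + ((n - m).choose i : ℝ) ≤ (n.choose i : ℝ) := by
      calc (n.choose (i+1) : ℝ) + ((n - m).choose i : ℝ)
          ≤ (n.choose i : ℝ) * (t / (1 - t)) + (n.choose i : ℝ) * t ^ m := by linarith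
        _ ≤ (n.choose i : ℝ) * (t / (1 - t)) + (n.choose i : ℝ) * ((1 - 2*t)/(1 - t)) := by
            have := mul_le_mul_of_nonneg_left htmb hC.le
            linarith
        _ = (n.choose i : ℝ) * (t / (1 - t) + (1 - 2*t)/(1 - t)) := by ring
        _ = (n.choose i : ℝ) := by rw [hsum, mul_one]
    exact_mod_cast hreal

open Finset in
theorem domCount_decreasing_of_universal {V : Type*} [Fintype V] (G : SimpleGraph V) (m : ℕ)
    (hm : m = universalCount G) (w : ℝ) (hw_pos : 0 < w)
    (hw_root : w ^ (m + 1) - w ^ m - 2 * w + 1 = 0)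
    (hw_min : ∀ x : ℝ, 0 < x → x ^ (m + 1) - x ^ m - 2 * x + 1 = 0 → w ≤ x)
    (i : ℕ) (hi : (1 - w) * (Fintype.card V : ℝ) ≤ (i : ℝ)) :
    domCount G (i + 1) ≤ domCount G i := by
  classical
  set n := Fintype.card V with hn
  -- m ≥ 1
  have hm1 : 1 ≤ m := by
    rcases Nat.eq_zero_or_pos m with h0 | h; swap
    · exact h
    rw [h0] at hw_root
    simp only [zero_add, pow_one, pow_zero] at hw_root
    linarith
  obtain ⟨hw2, hfnn⟩ := root_facts m hm1 w hw_pos hw_min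
  -- domCount as a filter cardinality
  have hdomEq : ∀ j : ℕ, domCount G j =
      (univ.filter (fun U : Finset V => U.card = j ∧ Dominates G U)).card := by
    intro j
    rw [domCount, Nat.card_eq_fintype_card, Fintype.card_subtype]
  -- the set of universal vertices
  set S : Finset V := univ.filter (fun v : V => ∀ u : V, u ≠ v → G.Adj v u) with hSdef
  have hS : S.card = m := by
    rw [hm, universalCount, Nat.card_eq_fintype_card, Fintype.card_subtype]
  have hmn : m ≤ n := by
    rw [← hS, hn]
    exact (card_le_card (subset_univ S)).trans_eq (card_univ)
  -- upper bound on domCount (i+1)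
  have hub : domCount G (i + 1) ≤ n.choose (i + 1) := by
    rw [hdomEq]
    calc (univ.filter (fun U : Finset V => U.card = i + 1 ∧ Dominates G U)).card
        ≤ (univ.filter (fun U : Finset V => U.card = i + 1)).card := by
          apply card_le_card
          intro U hU
          simp only [mem_filter] at hU ⊢
          exact ⟨hU.1, hU.2.1⟩
      _ = n.choose (i + 1) := by
          have : univ.filter (fun U : Finset V => U.card = i + 1)
              = powersetCard (i + 1) (univ : Finset V) := by
            ext U
            simp [Finset.mem_powersetCard]
          rw [this, Finset.card_powersetCard, card_univ]
  -- lower bound on domCount i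
  have hlb : n.choose i - (n - m).choose i ≤ domCount G i := by
    rw [hdomEq]
    have hsub : powersetCard i Sᶜ ⊆ powersetCard i (univ : Finset V) :=
      Finset.powersetCard_mono (subset_univ _)
    have hgood : (powersetCard i (univ : Finset V)) \ (powersetCard i Sᶜ)
        ⊆ univ.filter (fun U : Finset V => U.card = i ∧ Dominates G U) := by
      intro U hU
      rw [mem_sdiff, Finset.mem_powersetCard, Finset.mem_powersetCard] at hU
      obtain ⟨⟨_, hcard⟩, hnot⟩ := hU
      have : ¬ (U ⊆ Sᶜ) := fun h => hnot ⟨h, hcard⟩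
      obtain ⟨v, hvU, hvS⟩ := not_subset.mp this
      rw [Finset.notMem_compl] at hvS
      rw [hSdef, mem_filter] at hvS
      refine mem_filter.mpr ⟨mem_univ _, hcard, fun u => ?_⟩
      by_cases hu : u = v
      · exact Or.inl (hu ▸ hvU)
      · exact Or.inr ⟨v, hvU, hvS.2 u hu⟩
    calc n.choose i - (n - m).choose i
        = (powersetCard i (univ : Finset V)).card - (powersetCard i Sᶜ).card := by
          rw [Finset.card_powersetCard, Finset.card_powersetCard, card_univ, card_compl, hS]
      _ = ((powersetCard i (univ : Finset V)) \ (powersetCard i Sᶜ)).card :=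
          (card_sdiff_of_subset hsub).symm
      _ ≤ _ := card_le_card hgood
  have hkey := key_choose n i m w hm1 hmn hw_pos hw2 hfnn (hn ▸ hi)
  omega
end

section
/- For every positive integer m, the polynomial f_m(x) = x^{m+1} − x^m − 2x + 1 has a real root in the open interval (1/2 − 1/2^{m+1}, 1/2), and this is its smallest positive real root. -/
theorem root_location (m : ℕ) (hm : 1 ≤ m) :
    ∃ w : ℝ, w ∈ Set.Ioo (1 / 2 - 1 / 2 ^ (m + 1) : ℝ) (1 / 2 : ℝ) ∧
      w ^ (m + 1) - w ^ m - 2 * w + 1 = 0 ∧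
      ∀ x : ℝ, 0 < x → x ^ (m + 1) - x ^ m - 2 * x + 1 = 0 → w ≤ x := by
  have hq : (0:ℝ) < 2 ^ m := by positivity
  set a : ℝ := 1 / 2 - 1 / 2 ^ (m + 1) with ha
  clear_value a
  have hsucc : (2:ℝ) ^ (m + 1) = 2 ^ m * 2 := pow_succ 2 m
  have ha0 : 0 < a := by
    rw [ha, hsucc]
    have h2 : (2:ℝ) ≤ 2 ^ m := by
      calc (2:ℝ) = 2 ^ 1 := (pow_one 2).symm
        _ ≤ 2 ^ m := pow_le_pow_right₀ one_le_two hm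
    have h4 : (4:ℝ) ≤ 2 ^ m * 2 := by linarith
    have : 1 / (2 ^ m * 2 : ℝ) ≤ 1 / 4 := one_div_le_one_div_of_le (by norm_num) h4
    linarith
  have ha2 : a < 1 / 2 := by
    have : (0:ℝ) < 1 / 2 ^ (m + 1) := by positivity
    rw [ha]; linarith
  have hkey : 1 - 2 * a = (1:ℝ) / 2 ^ m := by
    rw [ha, hsucc]; field_simp; ring
  have ham : a ^ m < 1 / 2 ^ m := by
    have h := pow_lt_pow_left₀ ha2 ha0.le (by omega : m ≠ 0)
    calc a ^ m < (1 / 2 : ℝ) ^ m := h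
      _ = 1 / 2 ^ m := by rw [div_pow]; norm_num
  set f : ℝ → ℝ := fun x => x ^ (m + 1) - x ^ m - 2 * x + 1 with hf
  clear_value f
  have hfa : 0 < f a := by
    have hap : 0 < a ^ m := pow_pos ha0 m
    have hfa' : f a = a ^ m * a - a ^ m - 2 * a + 1 := by
      simp only [hf]; rw [pow_succ]
    rw [hfa']
    nlinarith [mul_pos hap ha0]
  have hfh : f (1 / 2) < 0 := by
    have hfh' : f (1 / 2) = (1 / 2 : ℝ) ^ m * (1 / 2) - (1 / 2) ^ m := by
      simp only [hf]; rw [pow_succ]; ring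
    rw [hfh']
    have : (0:ℝ) < (1 / 2 : ℝ) ^ m := by positivity
    nlinarith
  have hcont : Continuous f := by rw [hf]; fun_prop
  have hpos : ∀ x : ℝ, 0 < x → x ≤ a → 0 < x ^ (m + 1) - x ^ m - 2 * x + 1 := by
    intro x hx hxa
    have h1 : x ^ m ≤ a ^ m := pow_le_pow_left₀ hx.le hxa m
    have h4 : 0 < x ^ m * x := mul_pos (pow_pos hx m) hx
    rw [pow_succ]
    linarith
  set S : Set ℝ := Set.Icc a (1 / 2) ∩ {x | f x = 0} with hS
  have hSclosed : IsClosed S := isClosed_Icc.inter (isClosed_eq hcont continuous_const)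
  have hSne : S.Nonempty := by
    have hsub := intermediate_value_Icc' ha2.le hcont.continuousOn
    have h0 : (0:ℝ) ∈ Set.Icc (f (1 / 2)) (f a) := ⟨hfh.le, hfa.le⟩
    obtain ⟨w, hwI, hw0⟩ := hsub h0
    exact ⟨w, hwI, hw0⟩
  have hSbdd : BddBelow S := BddBelow.mono Set.inter_subset_left bddBelow_Icc
  have hwS : sInf S ∈ S := hSclosed.csInf_mem hSne hSbdd
  obtain ⟨⟨hwa, hwb⟩, hwf⟩ := hwS
  simp only [hf, Set.mem_setOf_eq] at hwf
  have hwa' : a < sInf S := lt_of_le_of_ne hwa (by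
    intro h; apply hfa.ne'; simp only [hf]; rw [h]; exact hwf)
  have hwb' : sInf S < 1 / 2 := lt_of_le_of_ne hwb (by
    intro h; apply hfh.ne; simp only [hf]; rw [← h]; exact hwf)
  refine ⟨sInf S, ⟨hwa', hwb'⟩, hwf, ?_⟩
  intro x hx hfx
  by_cases hxa : x ≤ a
  · exact absurd hfx (hpos x hx hxa).ne'
  · push_neg at hxa
    by_cases hxh : x ≤ 1 / 2
    · refine csInf_le hSbdd ⟨⟨hxa.le, hxh⟩, ?_⟩
      simp only [hf, Set.mem_setOf_eq]; exact hfx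
    · push_neg at hxh; linarith
end
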